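/- Let x₀ = (1 + √5)/2 and let b be a real number with 2b ≥ (2 − x₀) e^{−x₀}. Define f : (0, ∞) → ℝ by f(x) = x e^{−x} + b x². Then for every c > 0 the equation f(x) = c has exactly one positive solution; equivalently, f is injective on (0, ∞) (indeed strictly increasing there) and maps (0, ∞) onto (0, ∞). -/

import Mathlib

open Real Set

noncomputable def x0 : ℝ := (1 + Real.sqrt 5) / 2

lemma sqrt5_sq' : Real.sqrt 5 ^ 2 = 5 := Real.sq_sqrt (by norm_num)

lemma x0_sq : x0 ^ 2 = x0 + 1 := by
  have := sqrt5_sq'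
  unfold x0; nlinarith [this]

lemma one_lt_x0 : 1 < x0 := by
  have h : (2:ℝ) < Real.sqrt 5 := by
    nlinarith [sqrt5_sq', Real.sqrt_nonneg 5]
  unfold x0; linarith

lemma x0_lt_two : x0 < 2 := by
  have h : Real.sqrt 5 < 3 := by
    nlinarith [sqrt5_sq', Real.sqrt_nonneg 5]
  unfold x0; linarith

lemma x0_pos : 0 < x0 := by linarith [one_lt_x0]

noncomputable def cst : ℝ := (2 - x0) * Real.exp (-x0)

lemma cst_pos : 0 < cst :=
  mul_pos (by linarith [x0_lt_two]) (Real.exp_pos _)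

lemma exp_mul_x0 : Real.exp (-x0) * Real.exp x0 = 1 := by
  rw [← Real.exp_add]; simp

/-- h x = cst * x * e^x - (x - 1) -/
noncomputable def haux (x : ℝ) : ℝ := cst * (x * Real.exp x) - (x - 1)

lemma haux_deriv (x : ℝ) : HasDerivAt haux (cst * ((1 + x) * Real.exp x) - 1) x := by
  have h1 : HasDerivAt (fun x : ℝ => x * Real.exp x) (1 * Real.exp x + x * Real.exp x) x :=
    (hasDerivAt_id x).mul (Real.hasDerivAt_exp x)
  have h2 := (h1.const_mul cst).sub ((hasDerivAt_id x).sub_const 1)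
  refine h2.congr_deriv ?_
  ring

lemma haux_x0 : haux x0 = 0 := by
  unfold haux cst
  linear_combination (2 - x0) * x0 * exp_mul_x0 - x0_sq

lemma haux_deriv_x0 : cst * ((1 + x0) * Real.exp x0) - 1 = 0 := by
  unfold cst
  linear_combination (2 - x0) * (1 + x0) * exp_mul_x0 - x0_sq

lemma haux_pos {x : ℝ} (hx : 0 < x) (hne : x ≠ x0) : 0 < haux x := by
  have hcont : Continuous haux :=
    (((differentiable_id.mul Real.differentiable_exp).const_mul cst).sub
      (differentiable_id.sub_const 1)).continuous
  have key : ∀ u v : ℝ, 0 ≤ u → u < v → (1 + u) * Real.exp u < (1 + v) * Real.exp v := by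
    intro u v hu huv
    have h1 : Real.exp u < Real.exp v := Real.exp_lt_exp.mpr huv
    nlinarith [Real.exp_pos u, Real.exp_pos v]
  rcases lt_or_gt_of_ne hne with hlt | hgt
  · have hanti : StrictAntiOn haux (Icc 0 x0) := by
      apply strictAntiOn_of_deriv_neg (convex_Icc 0 x0) hcont.continuousOn
      intro y hy
      rw [interior_Icc] at hy
      rw [(haux_deriv y).deriv]
      have h2 := key y x0 (le_of_lt hy.1) hy.2
      have h3 := mul_lt_mul_of_pos_left h2 cst_pos
      linarith [haux_deriv_x0]
    have := hanti ⟨le_of_lt hx, le_of_lt hlt⟩ ⟨le_of_lt x0_pos, le_refl _⟩ hlt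
    rwa [haux_x0] at this
  · have hmono : StrictMonoOn haux (Ici x0) := by
      apply strictMonoOn_of_deriv_pos (convex_Ici x0) hcont.continuousOn
      intro y hy
      rw [interior_Ici] at hy
      rw [(haux_deriv y).deriv]
      have h2 := key x0 y (le_of_lt x0_pos) hy
      have h3 := mul_lt_mul_of_pos_left h2 cst_pos
      linarith [haux_deriv_x0]
    have := hmono (Set.mem_Ici.mpr (le_refl _)) (le_of_lt hgt) hgt
    rwa [haux_x0] at this

lemma f_deriv (b x : ℝ) :
    HasDerivAt (fun x : ℝ => x * Real.exp (-x) + b * x ^ 2)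
      ((1 - x) * Real.exp (-x) + 2 * b * x) x := by
  have he : HasDerivAt (fun x : ℝ => Real.exp (-x)) (Real.exp (-x) * (-1)) x :=
    ((hasDerivAt_id x).neg).exp
  have h1 : HasDerivAt (fun x : ℝ => x * Real.exp (-x))
      (1 * Real.exp (-x) + x * (Real.exp (-x) * (-1))) x :=
    (hasDerivAt_id x).mul he
  have h2 : HasDerivAt (fun x : ℝ => b * x ^ 2) (b * (↑2 * x ^ 1)) x :=
    (hasDerivAt_pow 2 x).const_mul b
  refine (h1.add h2).congr_deriv ?_
  ring

lemma f_deriv_pos (b : ℝ) (hb : cst ≤ 2 * b) {x : ℝ} (hx : 0 < x) (hne : x ≠ x0) :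
    0 < (1 - x) * Real.exp (-x) + 2 * b * x := by
  have h1 := haux_pos hx hne
  have he : Real.exp (-x) * Real.exp x = 1 := by rw [← Real.exp_add]; simp
  have hex : 0 < Real.exp (-x) := Real.exp_pos _
  have h2 : cst * x - (x - 1) * Real.exp (-x) = Real.exp (-x) * haux x := by
    unfold haux
    linear_combination (-cst) * x * he
  have h3 : 0 < cst * x - (x - 1) * Real.exp (-x) := by
    rw [h2]; exact mul_pos hex h1
  have h4 : cst * x ≤ 2 * b * x := mul_le_mul_of_nonneg_right hb (le_of_lt hx)
  have h5 : (1 - x) * Real.exp (-x) = -((x - 1) * Real.exp (-x)) := by ring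
  linarith

lemma f_strictMono (b : ℝ) (hb : cst ≤ 2 * b) :
    StrictMonoOn (fun x : ℝ => x * Real.exp (-x) + b * x ^ 2) (Set.Ioi 0) := by
  set f : ℝ → ℝ := fun x => x * Real.exp (-x) + b * x ^ 2 with hf
  have hcont : Continuous f := by
    apply Continuous.add
    · exact continuous_id.mul (Real.continuous_exp.comp continuous_neg)
    · exact continuous_const.mul (continuous_pow 2)
  have m1 : StrictMonoOn f (Icc 0 x0) := by
    apply strictMonoOn_of_deriv_pos (convex_Icc 0 x0) hcont.continuousOn
    intro y hy
    rw [interior_Icc] at hy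
    rw [(f_deriv b y).deriv]
    exact f_deriv_pos b hb hy.1 (ne_of_lt hy.2)
  have m2 : StrictMonoOn f (Ici x0) := by
    apply strictMonoOn_of_deriv_pos (convex_Ici x0) hcont.continuousOn
    intro y hy
    rw [interior_Ici] at hy
    rw [(f_deriv b y).deriv]
    exact f_deriv_pos b hb (lt_trans x0_pos hy) (ne_of_gt hy)
  intro x hx y hy hxy
  simp only [Set.mem_Ioi] at hx hy
  rcases le_or_gt y x0 with h1 | h1
  · exact m1 ⟨le_of_lt hx, le_of_lt (lt_of_lt_of_le hxy h1)⟩ ⟨le_of_lt hy, h1⟩ hxy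
  · rcases le_or_gt x0 x with h2 | h2
    · exact m2 h2 (le_of_lt h1) hxy
    · calc f x < f x0 := m1 ⟨le_of_lt hx, le_of_lt h2⟩ ⟨le_of_lt x0_pos, le_refl _⟩ h2
        _ < f y := m2 (Set.mem_Ici.mpr (le_refl _)) (le_of_lt h1) h1

/-- If `x₀ = (1 + √5)/2` and `2b ≥ (2 − x₀)e^{−x₀}`, then
`f(x) = x e^{−x} + b x²` is strictly increasing on `(0, ∞)`, maps `(0, ∞)` onto
`(0, ∞)`, and for every `c > 0` the equation `f(x) = c` has exactly one positive
solution. -/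
theorem one_stationary_point (b : ℝ)
    (hb : (2 - (1 + Real.sqrt 5) / 2) * Real.exp (-((1 + Real.sqrt 5) / 2)) ≤ 2 * b) :
    StrictMonoOn (fun x : ℝ => x * Real.exp (-x) + b * x ^ 2) (Set.Ioi 0) ∧
    (fun x : ℝ => x * Real.exp (-x) + b * x ^ 2) '' Set.Ioi 0 = Set.Ioi 0 ∧
    ∀ c > (0:ℝ), ∃! x : ℝ, 0 < x ∧ x * Real.exp (-x) + b * x ^ 2 = c := by
  have hb' : cst ≤ 2 * b := hb
  have hbpos : 0 < b := by linarith [cst_pos]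
  set f : ℝ → ℝ := fun x => x * Real.exp (-x) + b * x ^ 2 with hf
  have hcont : Continuous f := by
    apply Continuous.add
    · exact continuous_id.mul (Real.continuous_exp.comp continuous_neg)
    · exact continuous_const.mul (continuous_pow 2)
  have hmono := f_strictMono b hb'
  have hf0 : f 0 = 0 := by simp [hf]
  have himg : f '' Set.Ioi 0 = Set.Ioi 0 := by
    apply Set.Subset.antisymm
    · rintro _ ⟨x, hx, rfl⟩
      simp only [Set.mem_Ioi] at hx ⊢
      have : 0 < x * Real.exp (-x) := mul_pos hx (Real.exp_pos _)
      have : 0 < b * x ^ 2 := by positivity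
      simp only [hf]
      nlinarith [mul_pos hx (Real.exp_pos (-x))]
    · intro c hc
      simp only [Set.mem_Ioi] at hc
      set X : ℝ := max 1 (c / b + 1) with hX
      have hX1 : 1 ≤ X := le_max_left _ _
      have hX2 : c / b + 1 ≤ X := le_max_right _ _
      have hXpos : 0 < X := by linarith
      have hfX : c < f X := by
        have h1 : c / b < X := by linarith
        have h2 : c < b * X := by
          rw [div_lt_iff₀ hbpos] at h1; linarith [mul_comm b X ▸ h1]
        have h3 : b * X ≤ b * X ^ 2 := by nlinarith
        have h4 : 0 ≤ X * Real.exp (-X) := by positivity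
        simp only [hf]; linarith
      have := intermediate_value_Icc (le_of_lt hXpos) hcont.continuousOn
      have hcmem : c ∈ Set.Icc (f 0) (f X) := by
        rw [hf0]; exact ⟨le_of_lt hc, le_of_lt hfX⟩
      obtain ⟨x, hx, hfx⟩ := this hcmem
      refine ⟨x, ?_, hfx⟩
      simp only [Set.mem_Ioi]
      rcases eq_or_lt_of_le hx.1 with h | h
      · exfalso; rw [← h, hf0] at hfx; linarith
      · exact h
  refine ⟨hmono, himg, ?_⟩
  intro c hc
  have : c ∈ f '' Set.Ioi 0 := by rw [himg]; exact Set.mem_Ioi.mpr hc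
  obtain ⟨x, hx, hfx⟩ := this
  refine ⟨x, ⟨hx, hfx⟩, ?_⟩
  rintro y ⟨hy, hfy⟩
  exact hmono.injOn (Set.mem_Ioi.mpr hy) hx (by show f y = f x; rw [hfx]; exact hfy)
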